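/- Let u be twice differentiable on an open set Ω ⊂ ℝᵈ, u ≥ 0, Δu = 1 on {u > 0}, and let x₀ ∈ Ω with u(x₀) > 0. Then for every ρ > 0 with B_ρ(x₀) ⊂ Ω, sup_{∂B_ρ(x₀)} u ≥ u(x₀) + ρ²/(4d). -/

import Mathlib

open Metric

noncomputable def lap {d : ℕ} (f : EuclideanSpace ℝ (Fin d) → ℝ) (x : EuclideanSpace ℝ (Fin d)) : ℝ :=
  ∑ i : Fin d, fderiv ℝ (fun y => fderiv ℝ f y (EuclideanSpace.single i 1)) x (EuclideanSpace.single i 1)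

open scoped RealInnerProductSpace

/-- At an interior local maximum of `y ↦ u y - c‖y - x₀‖²`, the Laplacian of `u` is at most
`2 c d`. -/
lemma lap_le_of_isLocalMax {d : ℕ} {Ω : Set (EuclideanSpace ℝ (Fin d))} (hΩ : IsOpen Ω)
    {u : EuclideanSpace ℝ (Fin d) → ℝ} (hu : ContDiffOn ℝ 2 u Ω)
    {x₀ z : EuclideanSpace ℝ (Fin d)} (hz : z ∈ Ω) {c : ℝ}
    (hmax : IsLocalMax (fun y => u y - c * ‖y - x₀‖ ^ 2) z) :
    lap u z ≤ 2 * c * d := by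
  by_contra hcon
  push_neg at hcon
  -- some direction has second derivative exceeding 2c
  have hsum : ∑ _i : Fin d, (2 * c) <
      ∑ i : Fin d, fderiv ℝ (fun y => fderiv ℝ u y (EuclideanSpace.single i 1)) z
        (EuclideanSpace.single i 1) := by
    have : ∑ _i : Fin d, (2 * c) = 2 * c * d := by
      simp [Finset.sum_const, mul_comm]
    rw [this]
    exact hcon
  obtain ⟨i, _, hi⟩ := Finset.exists_lt_of_sum_lt hsum
  set e : EuclideanSpace ℝ (Fin d) := EuclideanSpace.single i 1 with he
  have hne : ‖e‖ = 1 := by simp [he, EuclideanSpace.norm_single]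
  set v : EuclideanSpace ℝ (Fin d) → ℝ := fun y => u y - c * ‖y - x₀‖ ^ 2 with hv
  -- radius of locality
  obtain ⟨r₁, hr₁, hmaxball⟩ := Metric.eventually_nhds_iff.mp hmax
  obtain ⟨r₂, hr₂, hr₂Ω⟩ := Metric.isOpen_iff.mp hΩ z hz
  set r : ℝ := min r₁ r₂ with hrdef
  have hr : 0 < r := lt_min hr₁ hr₂
  have hballΩ : ball z r ⊆ Ω := fun y hy => hr₂Ω (by
    simp only [mem_ball] at hy ⊢; exact lt_of_lt_of_le hy (min_le_right _ _))
  have hballmax : ∀ y ∈ ball z r, v y ≤ v z := fun y hy =>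
    hmaxball (lt_of_lt_of_le (mem_ball.mp hy) (min_le_left _ _))
  -- the line
  set L : ℝ → EuclideanSpace ℝ (Fin d) := fun t => z + t • e with hLdef
  have hL : ∀ t : ℝ, HasDerivAt L e t := by
    intro t
    have : HasDerivAt (fun s : ℝ => s • e) ((1 : ℝ) • e) t :=
      (hasDerivAt_id t).smul_const e
    simpa [hLdef] using this.const_add z
  have hLcont : Continuous L := continuous_const.add (continuous_id.smul continuous_const)
  have hLz : L 0 = z := by simp [hLdef]
  have hdist : ∀ t : ℝ, dist (L t) z = |t| := by
    intro t
    rw [dist_eq_norm]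
    simp [hLdef, norm_smul, hne, add_sub_cancel_left]
  set S : Set ℝ := Set.Ioo (-r) r with hSdef
  have hSopen : IsOpen S := isOpen_Ioo
  have hSmem : ∀ t ∈ S, L t ∈ ball z r := by
    intro t ht
    rw [mem_ball, hdist]
    exact abs_lt.mpr ⟨ht.1, ht.2⟩
  have hSΩ : ∀ t ∈ S, L t ∈ Ω := fun t ht => hballΩ (hSmem t ht)
  have h0S : (0 : ℝ) ∈ S := ⟨by linarith, hr⟩
  -- first and second derivatives of u along the line
  have hu1 : ContDiffOn ℝ 1 (fderiv ℝ u) Ω := hu.fderiv_of_isOpen hΩ (by norm_num)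
  set w : EuclideanSpace ℝ (Fin d) → ℝ := fun y => fderiv ℝ u y e with hwdef
  have hw : ContDiffOn ℝ 1 w Ω := by
    have := (ContinuousLinearMap.apply ℝ ℝ e).contDiff.comp_contDiffOn hu1
    exact this
  have hwdiff : ∀ y ∈ Ω, DifferentiableAt ℝ w y := fun y hy =>
    (hw.differentiableOn (by norm_num)).differentiableAt (hΩ.mem_nhds hy)
  have hudiff : ∀ y ∈ Ω, DifferentiableAt ℝ u y := fun y hy =>
    (hu.differentiableOn (by norm_num)).differentiableAt (hΩ.mem_nhds hy)
  set φ : ℝ → ℝ := fun t => fderiv ℝ w (L t) e with hφdef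
  have hφ0 : 2 * c < φ 0 := by simp only [hφdef, hLz]; exact hi
  -- continuity of φ near 0
  have hφcont : ContinuousOn φ S := by
    have h1 : ContinuousOn (fderiv ℝ w) Ω := hw.continuousOn_fderiv_of_isOpen hΩ le_rfl
    have h2 : ContinuousOn (fun t => fderiv ℝ w (L t)) S :=
      h1.comp hLcont.continuousOn hSΩ
    exact h2.clm_apply continuousOn_const
  have hφat : ContinuousAt φ 0 := hφcont.continuousAt (hSopen.mem_nhds h0S)
  have hev : ∀ᶠ t in nhds 0, 2 * c < φ t := hφat.eventually (eventually_gt_nhds hφ0)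
  obtain ⟨δ, hδ, hδφ⟩ := Metric.eventually_nhds_iff.mp hev
  set a : ℝ := min (δ / 2) (r / 2) with hadef
  have ha : 0 < a := lt_min (by linarith) (by linarith)
  have har : a < r := lt_of_le_of_lt (min_le_right _ _) (by linarith)
  have haδ : a < δ := lt_of_le_of_lt (min_le_left _ _) (by linarith)
  have hIccS : Set.Icc (-a) a ⊆ S := by
    intro t ht
    exact ⟨by linarith [ht.1], by linarith [ht.2]⟩
  -- expansion of the quadratic along the line
  set β : ℝ := 2 * c * ⟪z - x₀, e⟫ with hβdef
  have hquad : ∀ t : ℝ, ‖L t - x₀‖ ^ 2 = ‖z - x₀‖ ^ 2 + 2 * ⟪z - x₀, e⟫ * t + t ^ 2 := by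
    intro t
    have h1 : L t - x₀ = (z - x₀) + t • e := by
      simp [hLdef]; abel
    rw [h1, norm_add_sq_real, real_inner_smul_right, norm_smul]
    simp [hne, sq_abs]
    ring
  set g : ℝ → ℝ := fun t => v (L t) with hgdef
  have hgeq : g = fun t => u (L t) - (c * ‖z - x₀‖ ^ 2 + β * t + c * t ^ 2) := by
    funext t
    rw [hgdef]
    simp only [hv]
    rw [hquad t, hβdef]
    ring
  -- derivative of g on S
  have hderivg : ∀ t ∈ S, HasDerivAt g (w (L t) - (β + 2 * c * t)) t := by
    intro t ht
    rw [hgeq]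
    have hh : HasDerivAt (fun s => u (L s)) (w (L t)) t := by
      have hdu : HasFDerivAt u (fderiv ℝ u (L t)) (L t) :=
        (hudiff _ (hSΩ t ht)).hasFDerivAt
      exact hdu.comp_hasDerivAt t (hL t)
    have hP : HasDerivAt (fun s : ℝ => c * ‖z - x₀‖ ^ 2 + β * s + c * s ^ 2)
        (β + 2 * c * t) t := by
      have h1 : HasDerivAt (fun s : ℝ => c * ‖z - x₀‖ ^ 2 + β * s) (β) t := by
        simpa using ((hasDerivAt_id t).const_mul β).const_add (c * ‖z - x₀‖ ^ 2)
      have h2 : HasDerivAt (fun s : ℝ => c * s ^ 2) (2 * c * t) t := by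
        have := (hasDerivAt_pow 2 t).const_mul c
        exact this.congr_deriv (by rw [show (2:ℕ) - 1 = 1 from rfl]; ring)
      exact h1.add h2
    exact hh.sub hP
  -- second derivative of g
  have hderiv2 : ∀ t ∈ S, HasDerivAt (deriv g) (φ t - 2 * c) t := by
    intro t ht
    have heq : deriv g =ᶠ[nhds t] fun s => w (L s) - (β + 2 * c * s) := by
      filter_upwards [hSopen.mem_nhds ht] with s hs
      exact (hderivg s hs).deriv
    have hder : HasDerivAt (fun s => w (L s) - (β + 2 * c * s)) (φ t - 2 * c) t := by
      have h1 : HasDerivAt (fun s => w (L s)) (φ t) t := by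
        have hdw : HasFDerivAt w (fderiv ℝ w (L t)) (L t) :=
          (hwdiff _ (hSΩ t ht)).hasFDerivAt
        exact hdw.comp_hasDerivAt t (hL t)
      have h2 : HasDerivAt (fun s : ℝ => β + 2 * c * s) (2 * c) t := by
        simpa using ((hasDerivAt_id t).const_mul (2 * c)).const_add β
      exact h1.sub h2
    exact hder.congr_of_eventuallyEq heq
  -- strict convexity on [-a, a]
  have hgcont : ContinuousOn g (Set.Icc (-a) a) := by
    have h1 : ContinuousOn (fun t => u (L t)) S :=
      hu.continuousOn.comp hLcont.continuousOn hSΩ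
    have h2 : ContinuousOn g S := by
      rw [hgeq]
      exact h1.sub (by fun_prop)
    exact h2.mono hIccS
  have hconv : StrictConvexOn ℝ (Set.Icc (-a) a) g := by
    apply strictConvexOn_of_deriv2_pos (convex_Icc _ _) hgcont
    intro x hx
    rw [interior_Icc] at hx
    have hxS : x ∈ S := hIccS ⟨le_of_lt hx.1, le_of_lt hx.2⟩
    have h2 : deriv (deriv g) x = φ x - 2 * c := (hderiv2 x hxS).deriv
    have hφx : 2 * c < φ x := by
      apply hδφ
      rw [Real.dist_eq, sub_zero]
      have := abs_lt.mpr ⟨hx.1, hx.2⟩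
      linarith [haδ]
    have : deriv^[2] g x = deriv (deriv g) x := by
      simp [Function.iterate_succ, Function.iterate_one]
    rw [this, h2]
    linarith
  -- contradiction with the local maximum
  have hga : g a ≤ g 0 := by
    have h := hballmax (L a) (by rw [mem_ball, hdist, abs_of_pos ha]; exact har)
    simpa [hgdef, hLz] using h
  have hgma : g (-a) ≤ g 0 := by
    have h := hballmax (L (-a)) (by rw [mem_ball, hdist, abs_neg, abs_of_pos ha]; exact har)
    simpa [hgdef, hLz] using h
  have hne' : (-a) ≠ a := by
    intro h
    have : a = 0 := by linarith
    exact absurd this (ne_of_gt ha)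
  have hkey := hconv.2 (show (-a) ∈ Set.Icc (-a) a from ⟨le_refl _, by linarith⟩)
    (show a ∈ Set.Icc (-a) a from ⟨by linarith, le_refl _⟩) hne'
    (show (0:ℝ) < 1/2 by norm_num) (show (0:ℝ) < 1/2 by norm_num) (by norm_num)
  simp only [smul_eq_mul] at hkey
  rw [show (1:ℝ)/2 * (-a) + 1/2 * a = 0 by ring] at hkey
  have hfin : g 0 < g 0 := by
    calc g 0 < 1/2 * g (-a) + 1/2 * g a := hkey
    _ ≤ 1/2 * g 0 + 1/2 * g 0 := by
        have h1 : (1:ℝ)/2 * g (-a) ≤ 1/2 * g 0 := by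
          apply mul_le_mul_of_nonneg_left hgma; norm_num
        have h2 : (1:ℝ)/2 * g a ≤ 1/2 * g 0 := by
          apply mul_le_mul_of_nonneg_left hga; norm_num
        exact add_le_add h1 h2
    _ = g 0 := by ring
  exact lt_irrefl _ hfin

/-- Non-degeneracy for the obstacle problem: at a point `x₀` with `u(x₀) > 0`, the
supremum of `u` over `∂B_ρ(x₀)` exceeds `u(x₀) + ρ²/(4d)`. -/
theorem stmt18 (d : ℕ) (hd : 0 < d) (Ω : Set (EuclideanSpace ℝ (Fin d))) (hΩ : IsOpen Ω)
    (u : EuclideanSpace ℝ (Fin d) → ℝ) (hu : ContDiffOn ℝ 2 u Ω)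
    (hnn : ∀ x ∈ Ω, 0 ≤ u x)
    (hlap : ∀ x ∈ Ω, 0 < u x → lap u x = 1)
    (x₀ : EuclideanSpace ℝ (Fin d)) (hx₀ : x₀ ∈ Ω) (hpos : 0 < u x₀)
    (ρ : ℝ) (hρ : 0 < ρ) (hball : closedBall x₀ ρ ⊆ Ω) :
    u x₀ + ρ^2 / (4 * d) ≤ sSup (u '' sphere x₀ ρ) := by
  have hdR : (0 : ℝ) < d := by exact_mod_cast hd
  set c : ℝ := 1 / (4 * d) with hcdef
  have hc : 0 < c := by positivity
  set v : EuclideanSpace ℝ (Fin d) → ℝ := fun y => u y - c * ‖y - x₀‖ ^ 2 with hvdef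
  set W : Set (EuclideanSpace ℝ (Fin d)) := ball x₀ ρ ∩ {x | 0 < u x} with hWdef
  have hWΩ : W ⊆ Ω := fun x hx => hball (ball_subset_closedBall hx.1)
  have hWopen : IsOpen W := by
    have h1 : IsOpen (Ω ∩ u ⁻¹' (Set.Ioi 0)) :=
      hu.continuousOn.isOpen_inter_preimage hΩ isOpen_Ioi
    have : W = ball x₀ ρ ∩ (Ω ∩ u ⁻¹' (Set.Ioi 0)) := by
      ext x
      constructor
      · intro hx
        exact ⟨hx.1, hWΩ hx, hx.2⟩
      · intro hx
        exact ⟨hx.1, hx.2.2⟩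
    rw [this]
    exact isOpen_ball.inter h1
  have hx₀W : x₀ ∈ W := ⟨mem_ball_self hρ, hpos⟩
  set U : Set (EuclideanSpace ℝ (Fin d)) := connectedComponentIn W x₀ with hUdef
  have hUopen : IsOpen U := hWopen.connectedComponentIn
  have hUW : U ⊆ W := connectedComponentIn_subset _ _
  have hx₀U : x₀ ∈ U := mem_connectedComponentIn hx₀W
  set K : Set (EuclideanSpace ℝ (Fin d)) := closure U with hKdef
  have hKcb : K ⊆ closedBall x₀ ρ :=
    closure_minimal (fun x hx => ball_subset_closedBall (hUW hx).1) isClosed_closedBall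
  have hKΩ : K ⊆ Ω := fun x hx => hball (hKcb hx)
  have hKcomp : IsCompact K :=
    (isCompact_closedBall x₀ ρ).of_isClosed_subset isClosed_closure hKcb
  have hvcont : ContinuousOn v K := (hu.continuousOn.mono hKΩ).sub (by fun_prop)
  obtain ⟨z, hzK, hzmax⟩ := hKcomp.exists_isMaxOn ⟨x₀, subset_closure hx₀U⟩ hvcont
  have hvx₀ : v x₀ = u x₀ := by simp [hvdef]
  have hx₀lez : v x₀ ≤ v z := hzmax (subset_closure hx₀U)
  -- z cannot be in U
  have hzU : z ∉ U := by
    intro hzUmem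
    have hzΩ : z ∈ Ω := hWΩ (hUW hzUmem)
    have hlocmax : IsLocalMax v z := by
      have h1 : IsMaxOn v U z := hzmax.on_subset subset_closure
      exact h1.isLocalMax (hUopen.mem_nhds hzUmem)
    have hle : lap u z ≤ 2 * c * d := lap_le_of_isLocalMax hΩ hu hzΩ hlocmax
    have heq : lap u z = 1 := hlap z hzΩ (hUW hzUmem).2
    rw [heq, hcdef] at hle
    have h2 : 2 * (1 / (4 * (d:ℝ))) * d = 1 / 2 := by
      field_simp
      ring
    rw [h2] at hle
    linarith
  -- z is not in the open ball with u z > 0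
  have hzW : z ∉ W := by
    intro hzWmem
    apply hzU
    have hVopen : IsOpen (connectedComponentIn W z) := hWopen.connectedComponentIn
    have hzV : z ∈ connectedComponentIn W z := mem_connectedComponentIn hzWmem
    obtain ⟨y, hyV, hyU⟩ := mem_closure_iff.mp hzK _ hVopen hzV
    have h1 : connectedComponentIn W z = connectedComponentIn W y := connectedComponentIn_eq hyV
    have h2 : connectedComponentIn W x₀ = connectedComponentIn W y := connectedComponentIn_eq hyU
    have hz2 : z ∈ connectedComponentIn W y := h1 ▸ hzV
    show z ∈ connectedComponentIn W x₀
    exact h2 ▸ hz2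
  have hzΩ : z ∈ Ω := hKΩ hzK
  -- z must be on the sphere
  have hzsph : z ∈ sphere x₀ ρ := by
    rcases eq_or_lt_of_le (mem_closedBall.mp (hKcb hzK)) with h | h
    · exact h
    · -- z in open ball, so u z = 0, contradiction
      exfalso
      have huz : u z = 0 := by
        have h1 : ¬ 0 < u z := fun hgt => hzW ⟨mem_ball.mpr h, hgt⟩
        linarith [hnn z hzΩ, not_lt.mp h1]
      have hvz : v z = -(c * ‖z - x₀‖ ^ 2) := by simp [hvdef, huz]
      have : (0:ℝ) ≤ c * ‖z - x₀‖ ^ 2 := by positivity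
      rw [hvx₀] at hx₀lez
      rw [hvz] at hx₀lez
      linarith
  -- conclude
  have hzn : ‖z - x₀‖ = ρ := by
    rw [← dist_eq_norm]
    exact mem_sphere.mp hzsph
  have hvz : v z = u z - c * ρ ^ 2 := by rw [hvdef]; simp [hzn]
  have hsub : sphere x₀ ρ ⊆ Ω := fun x hx => hball (sphere_subset_closedBall hx)
  have hbdd : BddAbove (u '' sphere x₀ ρ) :=
    ((isCompact_sphere x₀ ρ).image_of_continuousOn (hu.continuousOn.mono hsub)).bddAbove
  have hle : u z ≤ sSup (u '' sphere x₀ ρ) := le_csSup hbdd ⟨z, hzsph, rfl⟩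
  have hcρ : ρ ^ 2 / (4 * (d:ℝ)) = c * ρ ^ 2 := by rw [hcdef]; ring
  rw [hvx₀] at hx₀lez
  rw [hvz] at hx₀lez
  rw [hcρ]
  linarith
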